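/- Let ℓ : ℝ^p → ℝ be a convex differentiable function, let λ > 0, let J ⊆ {1,…,p} be the set of penalized coordinates, and consider the objective f(θ) = ℓ(θ) + λ · Σ_{j ∈ J} |θ_j|. Suppose θ̂ is a minimizer of f over ℝ^p, and S ⊆ {1,…,p} is a set such that θ̂_j = 0 for every j ∈ J \ S and |∂ℓ/∂θ_j (θ̂)| < λ for every j ∈ J \ S. Then every minimizer θ̃ of f satisfies θ̃_j = 0 for all j ∈ J \ S. -/

import Mathlib

open Finset

/-- If `φ` has derivative `g` at `0` and all right slopes on `(0,1]` are `≥ c`, then `c ≤ g`. -/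
lemma le_deriv_of_slope {φ : ℝ → ℝ} {g c : ℝ} (hd : HasDerivAt φ g 0)
    (h : ∀ t ∈ Set.Ioc (0:ℝ) 1, c ≤ (φ t - φ 0) / t) : c ≤ g := by
  have hs : Filter.Tendsto (slope φ 0) (nhdsWithin 0 {0}ᶜ) (nhds g) :=
    hasDerivAt_iff_tendsto_slope.1 hd
  have hmono : nhdsWithin (0:ℝ) (Set.Ioi 0) ≤ nhdsWithin 0 {0}ᶜ :=
    nhdsWithin_mono _ (fun x hx => ne_of_gt hx)
  have hs' : Filter.Tendsto (slope φ 0) (nhdsWithin 0 (Set.Ioi 0)) (nhds g) :=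
    hs.mono_left hmono
  refine ge_of_tendsto hs' ?_
  filter_upwards [Ioc_mem_nhdsGT_of_mem (by constructor <;> norm_num : (0:ℝ) ∈ Set.Ico (0:ℝ) 1)]
    with t ht
  have := h t ht
  simpa [slope, sub_zero, div_eq_inv_mul] using this

/-- If `φ` has derivative `g` at `0` and all right slopes on `(0,1]` are `≤ c`, then `g ≤ c`. -/
lemma deriv_le_of_slope {φ : ℝ → ℝ} {g c : ℝ} (hd : HasDerivAt φ g 0)
    (h : ∀ t ∈ Set.Ioc (0:ℝ) 1, (φ t - φ 0) / t ≤ c) : g ≤ c := by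
  have hs : Filter.Tendsto (slope φ 0) (nhdsWithin 0 {0}ᶜ) (nhds g) :=
    hasDerivAt_iff_tendsto_slope.1 hd
  have hmono : nhdsWithin (0:ℝ) (Set.Ioi 0) ≤ nhdsWithin 0 {0}ᶜ :=
    nhdsWithin_mono _ (fun x hx => ne_of_gt hx)
  have hs' : Filter.Tendsto (slope φ 0) (nhdsWithin 0 (Set.Ioi 0)) (nhds g) :=
    hs.mono_left hmono
  refine le_of_tendsto hs' ?_
  filter_upwards [Ioc_mem_nhdsGT_of_mem (by constructor <;> norm_num : (0:ℝ) ∈ Set.Ico (0:ℝ) 1)]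
    with t ht
  have := h t ht
  simpa [slope, sub_zero, div_eq_inv_mul] using this

/-- Support-sharing lemma for ℓ1-regularized M-estimation: if `θh` is a minimizer
of `f θ = ℓ θ + λ * Σ_{j ∈ J} |θ j|`, with `θh j = 0` and `|∂ℓ/∂θ_j (θh)| < λ`
for every penalized coordinate `j ∈ J \ S`, then every minimizer of `f`
vanishes on `J \ S`. -/
theorem support_sharing {p : ℕ} (ℓ : (Fin p → ℝ) → ℝ)
    (hconv : ConvexOn ℝ Set.univ ℓ) (hdiff : Differentiable ℝ ℓ)
    (lam : ℝ) (hlam : 0 < lam) (J : Finset (Fin p)) (S : Finset (Fin p))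
    (f : (Fin p → ℝ) → ℝ)
    (hf : ∀ θ, f θ = ℓ θ + lam * ∑ j ∈ J, |θ j|)
    (θh : Fin p → ℝ) (hθh : ∀ θ, f θh ≤ f θ)
    (hzero : ∀ j ∈ J, j ∉ S → θh j = 0)
    (hgrad : ∀ j ∈ J, j ∉ S → |fderiv ℝ ℓ θh (Pi.single j 1)| < lam) :
    ∀ θt : Fin p → ℝ, (∀ θ, f θt ≤ f θ) → ∀ j ∈ J, j ∉ S → θt j = 0 := by
  intro θt hθt j hjJ hjS
  set G := fderiv ℝ ℓ θh with hG
  set d : Fin p → ℝ := fun k => θt k - θh k with hd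
  -- derivative of ℓ along a line through θh
  have hline : ∀ v : Fin p → ℝ, HasDerivAt (fun t : ℝ => ℓ (θh + t • v)) (G v) 0 := by
    intro v
    have h1 : HasFDerivAt ℓ G θh := (hdiff θh).hasFDerivAt
    have h2 : HasDerivAt (fun t : ℝ => θh + t • v) v 0 := by
      simpa using ((hasDerivAt_id (0:ℝ)).smul_const v).const_add θh
    have h1' : HasFDerivAt ℓ G (θh + (0:ℝ) • v) := by simpa using h1
    have := h1'.comp_hasDerivAt 0 h2
    simpa [Function.comp_def] using this
  -- the two objective values agree
  have hfeq : f θt = f θh := le_antisymm (hθt θh) (hθh θt)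
  -- per-coordinate lower bounds on directional derivatives
  set a : Fin p → ℝ := fun k => G (Pi.single k (d k)) with ha
  set c : Fin p → ℝ := fun k =>
    if k ∈ J then lam * |θh k| - lam * |θt k| else 0 with hc
  have hac : ∀ k, c k ≤ a k := by
    intro k
    set v : Fin p → ℝ := Pi.single k (d k) with hv
    have hder : HasDerivAt (fun t : ℝ => ℓ (θh + t • v)) (G v) 0 := hline v
    have h0v : θh + (0:ℝ) • v = θh := by simp
    by_cases hk : k ∈ J
    · -- minimality along coordinate k, with the penalty on coordinate k
      refine le_deriv_of_slope hder ?_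
      intro t ht
      obtain ⟨ht0, ht1⟩ := ht
      rw [le_div_iff₀ ht0]
      simp only [h0v]
      -- minimality of θh at θh + t • single k (d k)
      have hmin := hθh (θh + t • v)
      rw [hf, hf] at hmin
      have hoff : ∀ i ∈ J.erase k, |(θh + t • v) i| = |θh i| := by
        intro i hi
        have : i ≠ k := Finset.ne_of_mem_erase hi
        simp [hv, Pi.single_eq_of_ne this]
      have hsum1 : ∑ i ∈ J, |(θh + t • v) i|
          = |θh k + t * d k| + ∑ i ∈ J.erase k, |θh i| := by
        rw [← Finset.add_sum_erase J _ hk, Finset.sum_congr rfl hoff]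
        simp [hv, smul_eq_mul]
      have hsum2 : ∑ i ∈ J, |θh i| = |θh k| + ∑ i ∈ J.erase k, |θh i| :=
        (Finset.add_sum_erase J _ hk).symm
      rw [hsum1, hsum2] at hmin
      -- chord bound for the absolute value
      have habs : |θh k + t * d k| ≤ (1 - t) * |θh k| + t * |θt k| := by
        have h1 : θh k + t * d k = (1 - t) * θh k + t * θt k := by
          simp only [hd]; ring
        rw [h1]
        calc |(1 - t) * θh k + t * θt k| ≤ |(1 - t) * θh k| + |t * θt k| := abs_add_le _ _
          _ = (1 - t) * |θh k| + t * |θt k| := by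
              rw [abs_mul, abs_mul, abs_of_nonneg (by linarith), abs_of_nonneg (le_of_lt ht0)]
      simp only [hc, if_pos hk]
      nlinarith [hmin, habs]
    · -- coordinate not penalized: penalty unchanged along this line
      refine le_deriv_of_slope hder ?_
      intro t ht
      obtain ⟨ht0, ht1⟩ := ht
      rw [le_div_iff₀ ht0]
      simp only [h0v]
      have hmin := hθh (θh + t • v)
      rw [hf, hf] at hmin
      have hoff : ∀ i ∈ J, |(θh + t • v) i| = |θh i| := by
        intro i hi
        have : i ≠ k := fun h => hk (h ▸ hi)
        simp [hv, Pi.single_eq_of_ne this]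
      rw [Finset.sum_congr rfl hoff] at hmin
      simp only [hc, if_neg hk]
      linarith
  -- gradient inequality: G d ≤ ℓ θt - ℓ θh
  have hgrad_ineq : G d ≤ ℓ θt - ℓ θh := by
    refine deriv_le_of_slope (hline d) ?_
    intro t ht
    obtain ⟨ht0, ht1⟩ := ht
    rw [div_le_iff₀ ht0]
    have h0d : θh + (0:ℝ) • d = θh := by simp
    simp only [h0d]
    have hcomb : θh + t • d = (1 - t) • θh + t • θt := by
      funext i
      simp only [Pi.add_apply, Pi.smul_apply, smul_eq_mul, hd]
      ring
    have := hconv.2 (Set.mem_univ θh) (Set.mem_univ θt)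
      (by linarith : (0:ℝ) ≤ 1 - t) (le_of_lt ht0) (by ring)
    rw [← hcomb] at this
    simp only [smul_eq_mul] at this
    linarith
  -- sum of a equals G d
  have hsuma : ∑ k, a k = G d := by
    rw [← map_sum]
    congr 1
    exact Finset.univ_sum_single d
  -- sum of c equals ℓ θt - ℓ θh
  have hsumc : ∑ k, c k = ℓ θt - ℓ θh := by
    have h1 : ∑ k, c k = ∑ k ∈ J, (lam * |θh k| - lam * |θt k|) := by
      rw [hc, Finset.sum_ite_mem, Finset.univ_inter]
    have h2 : ℓ θt - ℓ θh = lam * ∑ i ∈ J, |θh i| - lam * ∑ i ∈ J, |θt i| := by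
      have := hfeq
      rw [hf, hf] at this
      linarith
    rw [h1, h2, Finset.sum_sub_distrib, Finset.mul_sum, Finset.mul_sum]
  -- per-term equality at coordinate j : a j ≤ c j
  have haj : a j ≤ c j := by
    have hnn : ∀ k ∈ Finset.univ, 0 ≤ a k - c k := fun k _ => sub_nonneg.2 (hac k)
    have := Finset.single_le_sum hnn (Finset.mem_univ j)
    rw [Finset.sum_sub_distrib, hsuma, hsumc] at this
    linarith [hgrad_ineq]
  -- compute a j and c j
  have hθhj : θh j = 0 := hzero j hjJ hjS
  have haj' : a j = θt j * G (Pi.single j 1) := by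
    have h1 : (Pi.single j (d j) : Fin p → ℝ) = d j • (Pi.single j 1 : Fin p → ℝ) := by
      funext i
      rcases eq_or_ne i j with h | h
      · subst h; simp
      · simp [Pi.single_eq_of_ne h]
    have hdj : d j = θt j := by simp [hd, hθhj]
    show G (Pi.single j (d j)) = θt j * G (Pi.single j 1)
    rw [h1, map_smul, smul_eq_mul, hdj]
  have hcj : c j = -(lam * |θt j|) := by
    simp [hc, if_pos hjJ, hθhj]
  rw [haj', hcj] at haj
  -- conclude using |G (single j 1)| < lam
  by_contra hne
  have hpos : 0 < |θt j| := abs_pos.2 hne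
  have h1 : -|θt j * G (Pi.single j 1)| ≤ θt j * G (Pi.single j 1) := neg_abs_le _
  have h2 : |θt j * G (Pi.single j 1)| = |θt j| * |G (Pi.single j 1)| := abs_mul _ _
  have h3 : |G (Pi.single j 1)| < lam := hgrad j hjJ hjS
  nlinarith
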